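/- Purity implies a nearby pure state with close marginal spectra: Let n ≥ 1, d : Fin n → ℕ with 1 ≤ d i for all i, and let ρ be a density matrix indexed by ((i : Fin n) → Fin (d i)). Let p ∈ ℝ with 1/2 < p and ((ρ*ρ).trace).re ≥ p. Then there exists a unit vector ψ such that (∑ u v, conj (ψ u) * ρ u v * ψ v).re ≥ p and, setting σ = |ψ⟩⟨ψ| (the matrix (u,v) ↦ ψ u * conj (ψ v)), one has ∑ k : Fin n, ∑ i : Fin (d k), |λ↓(ρ_k) i − λ↓(σ_k) i| ≤ n * (1 − Real.sqrt (2*p − 1)), where ρ_k and σ_k denote the one-body reduced density matrices at site k. -/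

import Mathlib

open scoped BigOperators
open ComplexOrder
open scoped Matrix

/-- The rank-one projection `|ψ⟩⟨ψ|`. -/
def outer {m : Type*} (ψ : m → ℂ) : Matrix m m ℂ :=
  Matrix.of fun u v => ψ u * (starRingEnd ℂ) (ψ v)

/-- The one-body reduced density matrix at site `k`. -/
noncomputable def red1 {n : ℕ} {d : Fin n → ℕ}
    (ρ : Matrix ((i : Fin n) → Fin (d i)) ((i : Fin n) → Fin (d i)) ℂ) (k : Fin n) :
    Matrix (Fin (d k)) (Fin (d k)) ℂ :=
  Matrix.of fun s t => ∑ x : (i : Fin n) → Fin (d i),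
    if x k = s then ρ x (Function.update x k t) else 0

open Classical in
/-- The non-increasing rearrangement `λ↓` of the eigenvalues of a Hermitian matrix;
junk value `0` for non-Hermitian matrices. -/
noncomputable def eigDesc {m : ℕ} (H : Matrix (Fin m) (Fin m) ℂ) : Fin m → ℝ :=
  if h : H.IsHermitian then fun i => h.eigenvalues (Tuple.sort (fun j => -h.eigenvalues j) i)
  else 0


section aux

section helpers

variable {ι : Type*} [Fintype ι] [DecidableEq ι]

lemma star_mul_self_eq_normSq (z : ℂ) : star z * z = ((‖z‖ ^ 2 : ℝ) : ℂ) := by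
  rw [Complex.star_def, mul_comm, Complex.mul_conj, Complex.normSq_eq_norm_sq]

lemma quad_eq (A : Matrix ι ι ℂ) (hA : A.IsHermitian) (x : ι → ℂ) :
    dotProduct (star x) (A *ᵥ x)
      = ∑ j, ((hA.eigenvalues j *
          ‖hA.eigenvectorBasis.repr ((WithLp.equiv 2 (ι → ℂ)).symm x) j‖ ^ 2 : ℝ) : ℂ) := by
  set U : Matrix ι ι ℂ := (hA.eigenvectorUnitary : Matrix ι ι ℂ) with hU
  have hspec := hA.spectral_theorem
  set y : ι → ℂ := (star U) *ᵥ x with hy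
  have h1 : dotProduct (star x) (A *ᵥ x)
      = dotProduct (star y) ((Matrix.diagonal (RCLike.ofReal ∘ hA.eigenvalues)) *ᵥ y) := by
    conv_lhs => rw [hspec, Unitary.conjStarAlgAut_apply]
    rw [← Matrix.mulVec_mulVec, ← Matrix.mulVec_mulVec, Matrix.dotProduct_mulVec (star x)]
    congr 1
    rw [hy, Matrix.star_mulVec]
    simp [Matrix.star_eq_conjTranspose, Matrix.conjTranspose_conjTranspose]
    rfl
  rw [h1]
  have h2 : ∀ j, y j = hA.eigenvectorBasis.repr ((WithLp.equiv 2 (ι → ℂ)).symm x) j := by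
    intro j
    rw [hA.eigenvectorBasis.repr_apply_apply, PiLp.inner_apply]
    simp only [Matrix.mulVec, dotProduct, Matrix.star_apply, hy, hU]
    refine Finset.sum_congr rfl fun i _ => ?_
    rw [RCLike.inner_apply, Matrix.IsHermitian.eigenvectorUnitary_apply]
    rw [mul_comm]; rfl
  simp only [dotProduct, Matrix.mulVec_diagonal, Pi.star_apply]
  refine Finset.sum_congr rfl fun j _ => ?_
  rw [← h2 j]
  rw [show star (y j) * ((RCLike.ofReal ∘ hA.eigenvalues) j * y j)
      = ((RCLike.ofReal ∘ hA.eigenvalues) j) * (star (y j) * y j) by ring]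
  rw [star_mul_self_eq_normSq]
  push_cast
  rfl

omit [DecidableEq ι] in
lemma parseval (b : OrthonormalBasis ι ℂ (EuclideanSpace ℂ ι)) (x : ι → ℂ) :
    ∑ j, ‖b.repr ((WithLp.equiv 2 (ι → ℂ)).symm x) j‖ ^ 2 = ∑ u, ‖x u‖ ^ 2 := by
  set x' : EuclideanSpace ℂ ι := (WithLp.equiv 2 (ι → ℂ)).symm x
  have h1 : ‖b.repr x'‖ = ‖x'‖ := b.repr.norm_map x'
  have h2 : ∀ (v : EuclideanSpace ℂ ι), ‖v‖ ^ 2 = ∑ u, ‖v u‖ ^ 2 := by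
    intro v
    rw [EuclideanSpace.norm_eq, Real.sq_sqrt]
    positivity
  have := congrArg (· ^ 2) h1
  rw [h2, h2] at this
  convert this using 2
  rfl

omit [DecidableEq ι] in
lemma inner_eq_dot (b : EuclideanSpace ℂ ι) (x : ι → ℂ) :
    (inner ℂ b ((WithLp.equiv 2 (ι → ℂ)).symm x) : ℂ) = dotProduct (star ⇑b) x := by
  rw [PiLp.inner_apply]
  refine Finset.sum_congr rfl fun u _ => ?_
  rw [RCLike.inner_apply]
  rw [mul_comm]; rfl

end helpers


section red1lemmas

variable {n : ℕ} {d : Fin n → ℕ} {k : Fin n} (c₀ : Fin (d k))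

/-- split equiv -/
def Eq1 (c₀ : Fin (d k)) :
    (Fin (d k) × {z : (i : Fin n) → Fin (d i) // z k = c₀}) ≃ ((i : Fin n) → Fin (d i)) where
  toFun p := Function.update p.2.1 k p.1
  invFun u := (u k, ⟨Function.update u k c₀, Function.update_self k c₀ u⟩)
  left_inv := by
    rintro ⟨s, ⟨z, hz⟩⟩
    refine Prod.ext (Function.update_self k s z) (Subtype.ext ?_)
    simp only
    rw [Function.update_idem, ← hz, Function.update_eq_self]
  right_inv := by
    intro u
    simp only
    rw [Function.update_idem, Function.update_eq_self]

lemma upd_self (z : {z : (i : Fin n) → Fin (d i) // z k = c₀}) :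
    Function.update z.1 k c₀ = z.1 := by
  obtain ⟨z, hz⟩ := z
  subst hz
  exact Function.update_eq_self k z

lemma red1_apply (M : Matrix ((i : Fin n) → Fin (d i)) ((i : Fin n) → Fin (d i)) ℂ)
    (s t : Fin (d k)) :
    red1 M k s t = ∑ z : {z : (i : Fin n) → Fin (d i) // z k = c₀},
      M (Function.update z.1 k s) (Function.update z.1 k t) := by
  rw [red1, Matrix.of_apply]
  rw [← Equiv.sum_comp (Eq1 c₀) (fun x => if x k = s then M x (Function.update x k t) else 0)]
  rw [Fintype.sum_prod_type]
  simp only [Eq1, Equiv.coe_fn_mk, Function.update_self, Function.update_idem]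
  rw [Finset.sum_comm]
  simp [Finset.sum_ite_eq']

lemma trace_red1 (c₀ : Fin (d k))
    (M : Matrix ((i : Fin n) → Fin (d i)) ((i : Fin n) → Fin (d i)) ℂ) :
    (red1 M k).trace = M.trace := by
  rw [Matrix.trace, Matrix.trace]
  simp only [Matrix.diag_apply, red1_apply c₀]
  rw [← Fintype.sum_prod_type']
  exact Fintype.sum_equiv (Eq1 c₀) _ (fun u => M u u) (by rintro ⟨s, z⟩; rfl)

lemma isHermitian_red1 (c₀ : Fin (d k))
    {M : Matrix ((i : Fin n) → Fin (d i)) ((i : Fin n) → Fin (d i)) ℂ}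
    (hM : M.IsHermitian) : (red1 M k).IsHermitian := by
  apply Matrix.IsHermitian.ext
  intro s t
  rw [red1_apply c₀, red1_apply c₀, star_sum]
  exact Finset.sum_congr rfl fun z _ => hM.apply _ _

lemma sum_rotate {α β γ : Type*} [Fintype α] [Fintype β] [Fintype γ] (F : α → β → γ → ℂ) :
    ∑ a, ∑ b, ∑ c, F a b c = ∑ c, ∑ a, ∑ b, F a b c :=
  calc ∑ a, ∑ b, ∑ c, F a b c = ∑ a, ∑ c, ∑ b, F a b c :=
        Finset.sum_congr rfl (fun a _ => Finset.sum_comm)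
    _ = ∑ c, ∑ a, ∑ b, F a b c := Finset.sum_comm

lemma dot_expand {ι : Type*} [Fintype ι] (M : Matrix ι ι ℂ) (a b : ι → ℂ) :
    dotProduct (star a) (M *ᵥ b) = ∑ u, ∑ v, star (a u) * M u v * b v := by
  simp [dotProduct, Matrix.mulVec, Finset.mul_sum, mul_assoc]

lemma quad_red1 (c₀ : Fin (d k))
    (M : Matrix ((i : Fin n) → Fin (d i)) ((i : Fin n) → Fin (d i)) ℂ)
    (y : Fin (d k) → ℂ) :
    dotProduct (star y) ((red1 M k) *ᵥ y)
      = ∑ z : {z : (i : Fin n) → Fin (d i) // z k = c₀},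
          dotProduct
            (star (fun u => if Function.update u k c₀ = z.1 then y (u k) else 0))
            (M *ᵥ (fun u => if Function.update u k c₀ = z.1 then y (u k) else 0)) := by
  set T := {z : (i : Fin n) → Fin (d i) // z k = c₀} with hT
  have hphi : ∀ (z : T) (s : Fin (d k)) (z₂ : T),
      (if Function.update (Function.update z₂.1 k s) k c₀ = z.1
        then y ((Function.update z₂.1 k s) k) else 0)
        = if z₂ = z then y s else 0 := by
    intro z s z₂
    rw [Function.update_idem, upd_self, Function.update_self]
    by_cases h : z₂ = z
    · subst h; simp
    · rw [if_neg h, if_neg (fun hc => h (Subtype.ext hc))]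
  have hQ : ∀ z : T,
      dotProduct
        (star (fun u => if Function.update u k c₀ = z.1 then y (u k) else 0))
        (M *ᵥ (fun u => if Function.update u k c₀ = z.1 then y (u k) else 0))
      = ∑ s, ∑ t, star (y s) * M (Function.update z.1 k s) (Function.update z.1 k t) * y t := by
    intro z
    rw [dot_expand]
    rw [← Equiv.sum_comp (Eq1 c₀) (fun u => ∑ v,
      star (if Function.update u k c₀ = z.1 then y (u k) else 0) * M u v
        * (if Function.update v k c₀ = z.1 then y (v k) else 0))]
    rw [Fintype.sum_prod_type]
    refine Finset.sum_congr rfl fun s _ => ?_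
    rw [show (∑ z₁ : T, ∑ v,
        star (if Function.update ((Eq1 c₀) (s, z₁)) k c₀ = z.1
          then y (((Eq1 c₀) (s, z₁)) k) else 0) * M ((Eq1 c₀) (s, z₁)) v
          * (if Function.update v k c₀ = z.1 then y (v k) else 0))
      = ∑ z₁ : T, ∑ v,
        star (if z₁ = z then y s else 0) * M (Function.update z₁.1 k s) v
          * (if Function.update v k c₀ = z.1 then y (v k) else 0) by
        refine Finset.sum_congr rfl fun z₁ _ => Finset.sum_congr rfl fun v _ => ?_
        simp only [Eq1, Equiv.coe_fn_mk]
        erw [hphi]]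
    -- collapse z₁ = z
    rw [show (∑ z₁ : T, ∑ v,
        star (if z₁ = z then y s else 0) * M (Function.update z₁.1 k s) v
          * (if Function.update v k c₀ = z.1 then y (v k) else 0))
      = ∑ z₁ : T, (if z₁ = z then (∑ v, star (y s) * M (Function.update z₁.1 k s) v
          * (if Function.update v k c₀ = z.1 then y (v k) else 0)) else 0) by
        refine Finset.sum_congr rfl fun z₁ _ => ?_
        split_ifs with h
        · rfl
        · simp]
    rw [Finset.sum_ite_eq' Finset.univ z]
    simp only [Finset.mem_univ, if_true]
    -- now inner sum over v
    rw [← Equiv.sum_comp (Eq1 c₀) (fun v => star (y s) * M (Function.update z.1 k s) v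
          * (if Function.update v k c₀ = z.1 then y (v k) else 0))]
    rw [Fintype.sum_prod_type]
    refine Finset.sum_congr rfl fun t _ => ?_
    rw [show (∑ z₂ : T, star (y s) * M (Function.update z.1 k s) ((Eq1 c₀) (t, z₂))
          * (if Function.update ((Eq1 c₀) (t, z₂)) k c₀ = z.1 then y (((Eq1 c₀) (t, z₂)) k) else 0))
      = ∑ z₂ : T, (if z₂ = z then star (y s) * M (Function.update z.1 k s)
          (Function.update z₂.1 k t) * y t else 0) by
        refine Finset.sum_congr rfl fun z₂ _ => ?_
        simp only [Eq1, Equiv.coe_fn_mk]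
        erw [hphi]
        split_ifs with h
        · rfl
        · simp]
    rw [Finset.sum_ite_eq' Finset.univ z]
    simp
  rw [Finset.sum_congr rfl (fun z _ => hQ z)]
  rw [dot_expand]
  simp only [red1_apply c₀, Finset.sum_mul, Finset.mul_sum]
  exact sum_rotate _

lemma red1_sub_smul (A B : Matrix ((i : Fin n) → Fin (d i)) ((i : Fin n) → Fin (d i)) ℂ)
    (c : ℂ) : red1 (A - c • B) k = red1 A k - c • red1 B k := by
  ext s t
  simp only [red1, Matrix.of_apply, Matrix.sub_apply, Matrix.smul_apply, smul_eq_mul]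
  rw [Finset.mul_sum, ← Finset.sum_sub_distrib]
  refine Finset.sum_congr rfl fun x _ => ?_
  split_ifs with h
  · simp [Matrix.sub_apply, Matrix.smul_apply, smul_eq_mul]
  · simp

lemma posSemidef_red1 (c₀ : Fin (d k))
    {M : Matrix ((i : Fin n) → Fin (d i)) ((i : Fin n) → Fin (d i)) ℂ}
    (hM : M.PosSemidef) : (red1 M k).PosSemidef := by
  refine Matrix.PosSemidef.of_dotProduct_mulVec_nonneg (isHermitian_red1 c₀ hM.1) fun y => ?_
  rw [quad_red1 c₀]
  exact Finset.sum_nonneg fun z _ => hM.dotProduct_mulVec_nonneg _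

end red1lemmas

variable {ι : Type*} [Fintype ι] [DecidableEq ι]

lemma trace_eq_sum_eig (A : Matrix ι ι ℂ) (hA : A.IsHermitian) :
    A.trace = ∑ j, (hA.eigenvalues j : ℂ) := by
  set U : Matrix ι ι ℂ := (hA.eigenvectorUnitary : Matrix ι ι ℂ) with hU
  have hUU : star U * U = 1 := by
    rw [hU]
    exact Matrix.mem_unitaryGroup_iff'.mp (hA.eigenvectorUnitary).2
  conv_lhs => rw [hA.spectral_theorem, Unitary.conjStarAlgAut_apply]
  rw [Matrix.trace_mul_comm, ← mul_assoc, hUU, one_mul, Matrix.trace_diagonal]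
  rfl

lemma trace_sq_eq_sum_eig (A : Matrix ι ι ℂ) (hA : A.IsHermitian) :
    (A * A).trace = ∑ j, ((hA.eigenvalues j : ℂ)) ^ 2 := by
  set U : Matrix ι ι ℂ := (hA.eigenvectorUnitary : Matrix ι ι ℂ) with hU
  have hUU : star U * U = 1 := by
    rw [hU]
    exact Matrix.mem_unitaryGroup_iff'.mp (hA.eigenvectorUnitary).2
  set D : Matrix ι ι ℂ := Matrix.diagonal (RCLike.ofReal ∘ hA.eigenvalues) with hD
  have hcancel : ∀ Y : Matrix ι ι ℂ, star U * (U * Y) = Y := by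
    intro Y
    rw [← mul_assoc, hUU, one_mul]
  have h1 : A * A = U * (D * (D * star U)) := by
    conv_lhs => rw [hA.spectral_theorem, Unitary.conjStarAlgAut_apply]
    simp only [← hU, ← hD, mul_assoc]
    rw [hcancel]
  rw [h1, Matrix.trace_mul_comm]
  simp only [mul_assoc]
  rw [hUU, mul_one, hD, Matrix.diagonal_mul_diagonal, Matrix.trace_diagonal]
  simp [pow_two]

lemma isHermitian_outer (ψ : ι → ℂ) : (outer ψ).IsHermitian := by
  apply Matrix.IsHermitian.ext
  intro u v
  simp [outer, Complex.star_def, map_mul, mul_comm]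

lemma trace_outer (ψ : ι → ℂ) : (outer ψ).trace = ((∑ u, ‖ψ u‖ ^ 2 : ℝ) : ℂ) := by
  rw [Matrix.trace]
  push_cast
  refine Finset.sum_congr rfl fun u _ => ?_
  rw [Matrix.diag_apply]
  show ψ u * (starRingEnd ℂ) (ψ u) = _
  rw [Complex.mul_conj, Complex.normSq_eq_norm_sq]
  push_cast
  ring

lemma outer_mulVec (ψ x : ι → ℂ) :
    (outer ψ) *ᵥ x = (∑ v, (starRingEnd ℂ) (ψ v) * x v) • ψ := by
  funext u
  simp only [Matrix.mulVec, dotProduct, outer, Matrix.of_apply, Pi.smul_apply,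
    smul_eq_mul, Finset.sum_mul, Finset.mul_sum]
  refine Finset.sum_congr rfl fun v _ => ?_
  ring

lemma star_mul_self_eq_normSq' (z : ℂ) : star z * z = ((‖z‖ ^ 2 : ℝ) : ℂ) := by
  rw [Complex.star_def, mul_comm, Complex.mul_conj, Complex.normSq_eq_norm_sq]

lemma quad_outer (ψ x : ι → ℂ) :
    dotProduct (star x) ((outer ψ) *ᵥ x)
      = ((‖∑ v, (starRingEnd ℂ) (ψ v) * x v‖ ^ 2 : ℝ) : ℂ) := by
  rw [outer_mulVec, dotProduct_smul, smul_eq_mul]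
  have h1 : dotProduct (star x) ψ = star (∑ v, (starRingEnd ℂ) (ψ v) * x v) := by
    rw [star_sum, dotProduct]
    refine Finset.sum_congr rfl fun v _ => ?_
    simp only [star_mul', Pi.star_apply, Complex.star_def, Complex.conj_conj]
    ring
  rw [h1, mul_comm, star_mul_self_eq_normSq']

lemma eigDesc_apply {m : ℕ} {H : Matrix (Fin m) (Fin m) ℂ} (h : H.IsHermitian) (i : Fin m) :
    eigDesc H i = h.eigenvalues (Tuple.sort (fun j => -h.eigenvalues j) i) := by
  rw [eigDesc, dif_pos h]

lemma eigDesc_antitone {m : ℕ} {H : Matrix (Fin m) (Fin m) ℂ} (h : H.IsHermitian) :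
    Antitone (eigDesc H) := by
  intro i j hij
  rw [eigDesc_apply h, eigDesc_apply h]
  have := Tuple.monotone_sort (fun j => -h.eigenvalues j) hij
  simp only [Function.comp_apply, neg_le_neg_iff] at this
  linarith

lemma sum_eigDesc {m : ℕ} {H : Matrix (Fin m) (Fin m) ℂ} (h : H.IsHermitian) :
    ∑ i, eigDesc H i = ∑ i, h.eigenvalues i := by
  simp_rw [eigDesc_apply h]
  exact Equiv.sum_comp (Tuple.sort fun j => -h.eigenvalues j) h.eigenvalues

lemma eigDesc_nonneg {m : ℕ} {H : Matrix (Fin m) (Fin m) ℂ} (h : H.PosSemidef) (i : Fin m) :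
    0 ≤ eigDesc H i := by
  rw [eigDesc_apply h.1]
  exact h.eigenvalues_nonneg _

lemma eigDesc_mono {m : ℕ} {A B : Matrix (Fin m) (Fin m) ℂ} (hA : A.IsHermitian)
    (hB : B.IsHermitian) {c : ℝ} (hc : 0 ≤ c) (h : (B - (c : ℂ) • A).PosSemidef) (i : Fin m) :
    c * eigDesc A i ≤ eigDesc B i := by
  classical
  set τA := Tuple.sort (fun j => -hA.eigenvalues j) with hτA
  set τB := Tuple.sort (fun j => -hB.eigenvalues j) with hτB
  set w : ({j : Fin m // i < j} ⊕ {j : Fin m // j < i}) → (Fin m → ℂ) :=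
    Sum.elim (fun j => ⇑(hA.eigenvectorBasis (τA j.1)))
      (fun j => ⇑(hB.eigenvectorBasis (τB j.1))) with hw
  set L : (Fin m → ℂ) →ₗ[ℂ] (({j : Fin m // i < j} ⊕ {j : Fin m // j < i}) → ℂ) :=
    { toFun := fun x s => dotProduct (star (w s)) x
      map_add' := by intro x y; funext s; simp [dotProduct_add]
      map_smul' := by intro r x; funext s; simp [dotProduct_smul] } with hL
  have hcard : Fintype.card ({j : Fin m // i < j} ⊕ {j : Fin m // j < i}) < m := by
    have hinj : Function.Injective
        (Sum.elim (fun j : {j : Fin m // i < j} => (⟨j.1, ne_of_gt j.2⟩ : {j : Fin m // j ≠ i}))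
          (fun j : {j : Fin m // j < i} => ⟨j.1, ne_of_lt j.2⟩)) := by
      rintro (⟨a, ha⟩ | ⟨a, ha⟩) (⟨b, hb⟩ | ⟨b, hb⟩) hab <;>
        simp only [Sum.elim_inl, Sum.elim_inr, Subtype.mk.injEq] at hab <;>
        first
          | (subst hab; rfl)
          | (exfalso; subst hab; exact absurd hb (not_lt.mpr (le_of_lt ha)))
    have h1 := Fintype.card_le_of_injective _ hinj
    have h2 : Fintype.card {j : Fin m // j ≠ i} = m - 1 := by
      have := Fintype.card_subtype_compl (fun j : Fin m => j = i)
      simpa [Fintype.card_subtype_eq] using this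
    have h3 : 0 < m := i.pos
    omega
  obtain ⟨x, hx0, hLx⟩ : ∃ x, x ≠ 0 ∧ L x = 0 := by
    by_contra hcon
    push_neg at hcon
    have hinj : Function.Injective L := by
      rw [← LinearMap.ker_eq_bot, LinearMap.ker_eq_bot']
      intro x hx
      by_contra hne
      exact hcon x hne hx
    have h1 := LinearMap.finrank_le_finrank_of_injective hinj
    rw [Module.finrank_fin_fun, Module.finrank_fintype_fun_eq_card] at h1
    omega
  set x' : EuclideanSpace ℂ (Fin m) := (WithLp.equiv 2 (Fin m → ℂ)).symm x with hx'
  set rA : Fin m → ℝ := fun j => ‖hA.eigenvectorBasis.repr x' j‖ ^ 2 with hrA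
  set rB : Fin m → ℝ := fun j => ‖hB.eigenvectorBasis.repr x' j‖ ^ 2 with hrB
  have hrA0 : ∀ j : Fin m, i < j → rA (τA j) = 0 := by
    intro j hj
    have h0 := congrFun hLx (Sum.inl ⟨j, hj⟩)
    simp only [hL, LinearMap.coe_mk, AddHom.coe_mk, hw, Sum.elim_inl, Pi.zero_apply] at h0
    have h2 : hA.eigenvectorBasis.repr x' (τA j) = 0 := by
      rw [hA.eigenvectorBasis.repr_apply_apply, hx', inner_eq_dot]
      exact h0
    simp [hrA, h2]
  have hrB0 : ∀ j : Fin m, j < i → rB (τB j) = 0 := by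
    intro j hj
    have h0 := congrFun hLx (Sum.inr ⟨j, hj⟩)
    simp only [hL, LinearMap.coe_mk, AddHom.coe_mk, hw, Sum.elim_inr, Pi.zero_apply] at h0
    have h2 : hB.eigenvectorBasis.repr x' (τB j) = 0 := by
      rw [hB.eigenvectorBasis.repr_apply_apply, hx', inner_eq_dot]
      exact h0
    simp [hrB, h2]
  set sA : ℝ := ∑ j, hA.eigenvalues j * rA j with hsA
  set sB : ℝ := ∑ j, hB.eigenvalues j * rB j with hsB
  have hsum : c * sA ≤ sB := by
    have key := h.dotProduct_mulVec_nonneg x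
    rw [Matrix.sub_mulVec, Matrix.smul_mulVec, dotProduct_sub,
      dotProduct_smul, quad_eq A hA x, quad_eq B hB x] at key
    rw [show (∑ j, ((hA.eigenvalues j *
          ‖hA.eigenvectorBasis.repr ((WithLp.equiv 2 (Fin m → ℂ)).symm x) j‖ ^ 2 : ℝ) : ℂ))
        = ((sA : ℝ) : ℂ) by rw [hsA]; simp only [hrA, hx']; push_cast; rfl] at key
    rw [show (∑ j, ((hB.eigenvalues j *
          ‖hB.eigenvectorBasis.repr ((WithLp.equiv 2 (Fin m → ℂ)).symm x) j‖ ^ 2 : ℝ) : ℂ))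
        = ((sB : ℝ) : ℂ) by rw [hsB]; simp only [hrB, hx']; push_cast; rfl] at key
    rw [smul_eq_mul, ← Complex.ofReal_mul, ← Complex.ofReal_sub] at key
    have := Complex.zero_le_real.mp key
    linarith
  set N : ℝ := ∑ u, ‖x u‖ ^ 2 with hN
  have hNpos : 0 < N := by
    obtain ⟨u, hu⟩ : ∃ u, x u ≠ 0 := by
      by_contra hcu
      push_neg at hcu
      exact hx0 (funext hcu)
    exact Finset.sum_pos' (fun u _ => by positivity)
      ⟨u, Finset.mem_univ u, pow_pos (norm_pos_iff.mpr hu) 2⟩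
  have hNA : ∑ j, rA (τA j) = N := by rw [Equiv.sum_comp τA rA]; exact parseval _ x
  have hNB : ∑ j, rB (τB j) = N := by rw [Equiv.sum_comp τB rB]; exact parseval _ x
  have hstep1 : eigDesc A i * N ≤ sA := by
    rw [← hNA, Finset.mul_sum]
    rw [show sA = ∑ j, hA.eigenvalues (τA j) * rA (τA j) from
      (Equiv.sum_comp τA (fun j => hA.eigenvalues j * rA j)).symm]
    refine Finset.sum_le_sum fun j _ => ?_
    rcases le_or_gt j i with hji | hij
    · refine mul_le_mul_of_nonneg_right ?_ (by positivity)
      have := eigDesc_antitone hA hji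
      rw [eigDesc_apply hA, eigDesc_apply hA] at this
      rw [eigDesc_apply hA]
      exact this
    · rw [hrA0 j hij]
      simp
  have hstep2 : sB ≤ eigDesc B i * N := by
    rw [← hNB, Finset.mul_sum]
    rw [show sB = ∑ j, hB.eigenvalues (τB j) * rB (τB j) from
      (Equiv.sum_comp τB (fun j => hB.eigenvalues j * rB j)).symm]
    refine Finset.sum_le_sum fun j _ => ?_
    rcases le_or_gt i j with hij | hji
    · refine mul_le_mul_of_nonneg_right ?_ (by positivity)
      have := eigDesc_antitone hB hij
      rw [eigDesc_apply hB, eigDesc_apply hB] at this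
      rw [eigDesc_apply hB]
      exact this
    · rw [hrB0 j hji]
      simp
  have hfin : (c * eigDesc A i) * N ≤ (eigDesc B i) * N := by
    calc (c * eigDesc A i) * N = c * (eigDesc A i * N) := by ring
    _ ≤ c * sA := mul_le_mul_of_nonneg_left hstep1 hc
    _ ≤ sB := hsum
    _ ≤ eigDesc B i * N := hstep2
  exact le_of_mul_le_mul_right hfin hNpos

end aux


set_option maxHeartbeats 1000000 in
theorem stmt13 (n : ℕ) (hn : 1 ≤ n) (d : Fin n → ℕ) (hd : ∀ i, 1 ≤ d i)
    (ρ : Matrix ((i : Fin n) → Fin (d i)) ((i : Fin n) → Fin (d i)) ℂ)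
    (hρ : ρ.PosSemidef) (htr : ρ.trace = 1)
    (p : ℝ) (hp : 1 / 2 < p) (hpur : p ≤ ((ρ * ρ).trace).re) :
    ∃ ψ : ((i : Fin n) → Fin (d i)) → ℂ,
      (∑ u, ‖ψ u‖ ^ 2 = 1) ∧
      p ≤ (∑ u, ∑ v, (starRingEnd ℂ) (ψ u) * ρ u v * ψ v).re ∧
      ∑ k : Fin n, ∑ i : Fin (d k),
          |eigDesc (red1 ρ k) i - eigDesc (red1 (outer ψ) k) i|
        ≤ (n : ℝ) * (1 - Real.sqrt (2 * p - 1)) := by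
  classical
  have hne : Nonempty ((i : Fin n) → Fin (d i)) := ⟨fun i => ⟨0, Nat.lt_of_lt_of_le Nat.zero_lt_one (hd i)⟩⟩
  have hH : ρ.IsHermitian := hρ.1
  set μ := hH.eigenvalues with hμdef
  obtain ⟨i₀, hmax⟩ := Finite.exists_max μ
  set t := μ i₀ with ht
  set ψ : ((i : Fin n) → Fin (d i)) → ℂ := ⇑(hH.eigenvectorBasis i₀) with hψ
  have hμ0 : ∀ j, 0 ≤ μ j := fun j => hρ.eigenvalues_nonneg j
  have hsum1 : ∑ j, μ j = 1 := by
    have h1 := trace_eq_sum_eig ρ hH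
    rw [htr] at h1
    exact_mod_cast h1.symm
  have hpsum : p ≤ ∑ j, (μ j) ^ 2 := by
    have h1 := trace_sq_eq_sum_eig ρ hH
    rw [h1] at hpur
    rw [show (∑ j, ((μ j : ℂ)) ^ 2) = ((∑ j, (μ j) ^ 2 : ℝ) : ℂ) by push_cast; rfl] at hpur
    rwa [Complex.ofReal_re] at hpur
  have hpt : p ≤ t := by
    refine le_trans hpsum ?_
    calc ∑ j, μ j ^ 2 ≤ ∑ j, t * μ j := Finset.sum_le_sum fun j _ => by
          rw [pow_two]; exact mul_le_mul_of_nonneg_right (hmax j) (hμ0 j)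
      _ = t := by rw [← Finset.mul_sum, hsum1, mul_one]
  have ht1 : t ≤ 1 := by
    rw [← hsum1]
    exact Finset.single_le_sum (fun j _ => hμ0 j) (Finset.mem_univ i₀)
  have ht0 : 0 ≤ t := hμ0 i₀
  have hS : ∑ j ∈ Finset.univ.erase i₀, μ j = 1 - t := by
    have h1 := Finset.add_sum_erase Finset.univ μ (Finset.mem_univ i₀)
    rw [hsum1] at h1
    linarith [h1]
  have hq2 : p ≤ t ^ 2 + (1 - t) ^ 2 := by
    have h2 : ∑ j ∈ Finset.univ.erase i₀, (μ j) ^ 2 ≤ (1 - t) ^ 2 := by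
      rw [← hS]
      calc ∑ j ∈ Finset.univ.erase i₀, μ j ^ 2
          ≤ ∑ j ∈ Finset.univ.erase i₀, μ j * (∑ j' ∈ Finset.univ.erase i₀, μ j') :=
            Finset.sum_le_sum fun j hj => by
              rw [pow_two]
              exact mul_le_mul_of_nonneg_left
                (Finset.single_le_sum (fun j' _ => hμ0 j') hj) (hμ0 j)
        _ = (∑ j ∈ Finset.univ.erase i₀, μ j) * (∑ j ∈ Finset.univ.erase i₀, μ j) := by
            rw [← Finset.sum_mul]
        _ = (∑ j ∈ Finset.univ.erase i₀, μ j) ^ 2 := (pow_two _).symm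
    have h3 := Finset.add_sum_erase Finset.univ (fun j => μ j ^ 2) (Finset.mem_univ i₀)
    have : t ^ 2 = μ i₀ ^ 2 := by rw [ht]
    linarith [hpsum, h2, h3]
  have hsq : Real.sqrt (2 * p - 1) ≤ 2 * t - 1 := by
    have h4 : 2 * p - 1 ≤ (2 * t - 1) ^ 2 := by nlinarith [hq2]
    calc Real.sqrt (2 * p - 1) ≤ Real.sqrt ((2 * t - 1) ^ 2) := Real.sqrt_le_sqrt h4
      _ = |2 * t - 1| := Real.sqrt_sq_eq_abs _
      _ = 2 * t - 1 := abs_of_nonneg (by nlinarith [hpt, hp])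
  have hunit : ∑ u, ‖ψ u‖ ^ 2 = 1 := by
    have h1 : ‖hH.eigenvectorBasis i₀‖ = 1 := hH.eigenvectorBasis.orthonormal.1 i₀
    have h2 : ‖hH.eigenvectorBasis i₀‖ ^ 2 = ∑ u, ‖hH.eigenvectorBasis i₀ u‖ ^ 2 := by
      rw [EuclideanSpace.norm_eq, Real.sq_sqrt]
      positivity
    have h3 : ∑ u, ‖ψ u‖ ^ 2 = ∑ u, ‖hH.eigenvectorBasis i₀ u‖ ^ 2 := rfl
    rw [h3, ← h2, h1, one_pow]
  have heig : ρ *ᵥ ψ = (t : ℂ) • ψ := by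
    rw [hψ, hH.mulVec_eigenvectorBasis i₀]
    funext u
    simp only [Pi.smul_apply, Complex.real_smul, smul_eq_mul]
    rfl
  have hsr : ∀ z : ℂ, (starRingEnd ℂ) z = star z := fun z => rfl
  have hval : (∑ u, ∑ v, (starRingEnd ℂ) (ψ u) * ρ u v * ψ v) = (t : ℂ) := by
    simp only [hsr]
    rw [← dot_expand, heig, dotProduct_smul, smul_eq_mul]
    have h5 : dotProduct (star ψ) ψ = ((∑ u, ‖ψ u‖ ^ 2 : ℝ) : ℂ) := by
      rw [dotProduct]
      push_cast
      refine Finset.sum_congr rfl fun u _ => ?_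
      rw [Pi.star_apply, star_mul_self_eq_normSq]
      push_cast
      rfl
    rw [h5, hunit]
    simp
  have hσ : (outer ψ).PosSemidef :=
    Matrix.PosSemidef.of_dotProduct_mulVec_nonneg (isHermitian_outer ψ) fun x => by
      rw [quad_outer]
      exact Complex.zero_le_real.mpr (by positivity)
  have hdiffPSD : (ρ - (t : ℂ) • outer ψ).PosSemidef := by
    refine Matrix.PosSemidef.of_dotProduct_mulVec_nonneg ?_ ?_
    · apply Matrix.IsHermitian.ext
      intro u v
      simp only [Matrix.sub_apply, Matrix.smul_apply, star_sub, star_smul, smul_eq_mul]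
      rw [hH.apply, star_mul', (isHermitian_outer ψ).apply]
      congr 1
      rw [Complex.star_def, Complex.conj_ofReal]
    · intro x
      rw [Matrix.sub_mulVec, Matrix.smul_mulVec, dotProduct_sub,
        dotProduct_smul, quad_eq ρ hH x, quad_outer ψ x]
      set x' := (WithLp.equiv 2 (((i : Fin n) → Fin (d i)) → ℂ)).symm x with hx'
      have houter : (‖∑ v, (starRingEnd ℂ) (ψ v) * x v‖ ^ 2 : ℝ)
          = ‖hH.eigenvectorBasis.repr x' i₀‖ ^ 2 := by
        have h6 : hH.eigenvectorBasis.repr x' i₀ = ∑ v, (starRingEnd ℂ) (ψ v) * x v := by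
          rw [hH.eigenvectorBasis.repr_apply_apply, hx', inner_eq_dot, dotProduct]
          refine Finset.sum_congr rfl fun v _ => ?_
          rw [hψ]
          rfl
        rw [h6]
      rw [houter]
      rw [show (∑ j, ((μ j * ‖hH.eigenvectorBasis.repr x' j‖ ^ 2 : ℝ) : ℂ))
          = ((∑ j, μ j * ‖hH.eigenvectorBasis.repr x' j‖ ^ 2 : ℝ) : ℂ) by push_cast; rfl]
      rw [smul_eq_mul, ← Complex.ofReal_mul, ← Complex.ofReal_sub]
      refine Complex.zero_le_real.mpr ?_
      have h7 := Finset.single_le_sum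
        (f := fun j => μ j * ‖hH.eigenvectorBasis.repr x' j‖ ^ 2)
        (fun j _ => mul_nonneg (hμ0 j) (by positivity)) (Finset.mem_univ i₀)
      simp only at h7
      linarith [h7]
  refine ⟨ψ, hunit, ?_, ?_⟩
  · rw [hval, Complex.ofReal_re]
    exact hpt
  · have hsite : ∀ k : Fin n, ∑ i : Fin (d k),
        |eigDesc (red1 ρ k) i - eigDesc (red1 (outer ψ) k) i|
          ≤ 1 - Real.sqrt (2 * p - 1) := by
      intro k
      have hc0 : 0 < d k := Nat.lt_of_lt_of_le Nat.zero_lt_one (hd k)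
      set c₀ : Fin (d k) := ⟨0, hc0⟩ with hc₀
      have hAk : (red1 ρ k).PosSemidef := posSemidef_red1 c₀ hρ
      have hBk : (red1 (outer ψ) k).PosSemidef := posSemidef_red1 c₀ hσ
      have hmono : ∀ i, t * eigDesc (red1 (outer ψ) k) i ≤ eigDesc (red1 ρ k) i := by
        intro i
        refine eigDesc_mono hBk.1 hAk.1 ht0 ?_ i
        rw [← red1_sub_smul]
        exact posSemidef_red1 c₀ hdiffPSD
      have hsa : ∑ i, eigDesc (red1 ρ k) i = 1 := by
        have h1 := trace_eq_sum_eig _ hAk.1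
        rw [trace_red1 c₀, htr] at h1
        rw [sum_eigDesc hAk.1]
        exact_mod_cast h1.symm
      have hsb : ∑ i, eigDesc (red1 (outer ψ) k) i = 1 := by
        have h1 := trace_eq_sum_eig _ hBk.1
        rw [trace_red1 c₀, trace_outer, hunit] at h1
        rw [sum_eigDesc hBk.1]
        exact_mod_cast h1.symm
      calc ∑ i : Fin (d k), |eigDesc (red1 ρ k) i - eigDesc (red1 (outer ψ) k) i|
          ≤ ∑ i : Fin (d k), ((eigDesc (red1 ρ k) i - t * eigDesc (red1 (outer ψ) k) i)
              + (1 - t) * eigDesc (red1 (outer ψ) k) i) := by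
            refine Finset.sum_le_sum fun i _ => ?_
            have hb0 : 0 ≤ eigDesc (red1 (outer ψ) k) i := eigDesc_nonneg hBk i
            have hm := hmono i
            have h7 : 0 ≤ (1 - t) * eigDesc (red1 (outer ψ) k) i :=
              mul_nonneg (by linarith) hb0
            have h8 : t * eigDesc (red1 (outer ψ) k) i ≤ eigDesc (red1 (outer ψ) k) i := by
              nlinarith
            rcases abs_cases (eigDesc (red1 ρ k) i - eigDesc (red1 (outer ψ) k) i) with
              ⟨h9, _⟩ | ⟨h9, _⟩ <;> rw [h9] <;> nlinarith
        _ = (1 - t * 1) + (1 - t) * 1 := by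
            rw [Finset.sum_add_distrib, Finset.sum_sub_distrib, ← Finset.mul_sum,
              ← Finset.mul_sum, hsa, hsb]
        _ ≤ 1 - Real.sqrt (2 * p - 1) := by linarith [hsq]
    calc ∑ k : Fin n, ∑ i : Fin (d k),
          |eigDesc (red1 ρ k) i - eigDesc (red1 (outer ψ) k) i|
        ≤ ∑ _k : Fin n, (1 - Real.sqrt (2 * p - 1)) :=
          Finset.sum_le_sum fun k _ => hsite k
      _ = (n : ℝ) * (1 - Real.sqrt (2 * p - 1)) := by
          rw [Finset.sum_const, Finset.card_univ, Fintype.card_fin, nsmul_eq_mul]
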